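/- Let Q be a real Hilbert space, B : Q → Q a bounded, symmetric, positive definite linear operator, and d̃, y ∈ Q with ⟨d̃, y⟩ > 0. Then the inverse BFGS update B⁺ of B by the pair (d̃, y) satisfies ⟨p, B⁺ p⟩ ≥ ⟨d̃, p⟩² / ⟨d̃, y⟩ for every p ∈ Q. -/

import Mathlib

open RealInnerProductSpace

/-- Lower bound for the quadratic form of the inverse BFGS update. -/
theorem inverse_bfgs_update_quadratic_lower_bound
    {Q : Type*} [NormedAddCommGroup Q] [InnerProductSpace ℝ Q] [CompleteSpace Q]
    (B : Q →L[ℝ] Q)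
    (hsymm : ∀ x w : Q, ⟪B x, w⟫ = ⟪x, B w⟫)
    (hpos : ∀ p : Q, p ≠ 0 → 0 < ⟪p, B p⟫)
    (d y : Q) (hdy : 0 < ⟪d, y⟫)
    (Bplus : Q →L[ℝ] Q)
    (hBplus : ∀ p : Q, Bplus p =
      B p + (⟪d, y⟫)⁻¹ • (⟪d, p⟫ • (d - B y) + ⟪d - B y, p⟫ • d)
        - (⟪d - B y, y⟫ * ⟪d, p⟫ / ⟪d, y⟫ ^ 2) • d) :
    ∀ p : Q, ⟪d, p⟫ ^ 2 / ⟪d, y⟫ ≤ ⟪p, Bplus p⟫ := by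
  intro p
  have hs : (⟪d, y⟫ : ℝ) ≠ 0 := ne_of_gt hdy
  set a : ℝ := ⟪d, p⟫ with ha
  set s : ℝ := ⟪d, y⟫ with hsdef
  set u : Q := p - (a / s) • y with hu
  -- quadratic form of B at u is nonnegative
  have huB : 0 ≤ ⟪u, B u⟫ := by
    rcases eq_or_ne u 0 with h | h
    · simp [h]
    · exact le_of_lt (hpos u h)
  -- expand ⟪u, B u⟫
  have hsymm' : ⟪p, B y⟫ = ⟪y, B p⟫ := by
    rw [← hsymm, real_inner_comm]
  have hexp : ⟪u, B u⟫
      = ⟪p, B p⟫ - (a / s) * ⟪y, B p⟫ - (a / s) * ⟪y, B p⟫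
        + (a / s) ^ 2 * ⟪y, B y⟫ := by
    rw [hu, map_sub, map_smul]
    simp only [inner_sub_left, inner_sub_right, real_inner_smul_left,
      real_inner_smul_right, smul_eq_mul]
    rw [hsymm']
    ring
  -- expand ⟪p, Bplus p⟫
  have hBp : ⟪p, Bplus p⟫
      = ⟪p, B p⟫ + s⁻¹ * (a * (a - ⟪y, B p⟫) + (a - ⟪y, B p⟫) * a)
        - ((s - ⟪y, B y⟫) * a / s ^ 2) * a := by
    rw [hBplus]
    simp only [inner_sub_right, inner_add_right, real_inner_smul_right,
      inner_sub_left, inner_sub_right]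
    rw [hsymm', ← hsymm y y]
    rw [real_inner_comm (B y) y] at *
    ring_nf
    rw [real_inner_comm p d, real_inner_comm p (B y), hsymm']
    rw [real_inner_comm d p, ← ha, ← hsdef]
    ring
  have key : ⟪p, Bplus p⟫ = ⟪u, B u⟫ + a ^ 2 / s := by
    rw [hBp, hexp]
    field_simp
    ring
  rw [key]
  linarith
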